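/- Let 𝒳 and 𝒴 be real Banach spaces, let Ω be a neighborhood of 0 in 𝒳, and let F : Ω → 𝒴 be a continuous function with F(0) = 0. Suppose there exist a surjective continuous linear operator L : 𝒳 → 𝒴 and a constant C ≥ 0 such that ‖F(x₁) − F(x₂) − L(x₁ − x₂)‖ ≤ C·(‖x₁‖ + ‖x₂‖)·‖x₁ − x₂‖ for all x₁, x₂ ∈ Ω. Then F has a continuous local right inverse: there are an open neighborhood V of 0 in 𝒴 and a continuous map σ : V → Ω such that F(σ(y)) = y for all y ∈ V. -/

import Mathlib

open Set Function Filter Topology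

lemma graves_aux_approx_right_inverse
    {𝒳 𝒴 : Type*} [NormedAddCommGroup 𝒳] [NormedSpace ℝ 𝒳] [CompleteSpace 𝒳]
    [NormedAddCommGroup 𝒴] [NormedSpace ℝ 𝒴] [CompleteSpace 𝒴]
    (L : 𝒳 →L[ℝ] 𝒴) (hL : Function.Surjective L) :
    ∃ M : ℝ, 0 < M ∧ ∃ B : 𝒴 → 𝒳, Continuous B ∧ B 0 = 0 ∧
      (∀ y, ‖B y‖ ≤ M * ‖y‖) ∧ (∀ y, ‖L (B y) - y‖ ≤ (1/4) * ‖y‖) := by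
  obtain R := L.nonlinearRightInverseOfSurjective (LinearMap.range_eq_top.mpr hL)
  set M₀ : ℝ := (R.nnnorm : ℝ) + 1 with hM₀
  have hM₀pos : 0 < M₀ := by positivity
  have hRbound : ∀ y, ‖R y‖ ≤ M₀ * ‖y‖ := by
    intro y
    refine (R.bound y).trans ?_
    have : (R.nnnorm : ℝ) ≤ M₀ := by simp [hM₀]
    nlinarith [norm_nonneg y]
  set Z := {y : 𝒴 // y ≠ 0} with hZ
  -- the open cover
  set U : Z → Set Z := fun i => {z : Z | ‖(z : 𝒴) - (i : 𝒴)‖ < ‖(i : 𝒴)‖ / 8} with hU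
  have hUopen : ∀ i, IsOpen (U i) := by
    intro i
    have : Continuous fun z : Z => ‖(z : 𝒴) - (i : 𝒴)‖ :=
      (continuous_subtype_val.sub continuous_const).norm
    exact isOpen_lt this continuous_const
  have hUcover : (univ : Set Z) ⊆ ⋃ i, U i := by
    intro z _
    refine mem_iUnion.2 ⟨z, ?_⟩
    have hzpos : (0:ℝ) < ‖(z : 𝒴)‖ := norm_pos_iff.2 z.2
    show ‖(z : 𝒴) - (z : 𝒴)‖ < ‖(z : 𝒴)‖ / 8
    rw [sub_self, norm_zero]
    positivity
  obtain ⟨f, hf⟩ := PartitionOfUnity.exists_isSubordinate isClosed_univ U hUopen hUcover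
  set x : Z → 𝒳 := fun i => R (i : 𝒴) with hx
  set B' : Z → 𝒳 := fun z => ∑ᶠ i, f i z • x i with hB'
  have hB'cont : Continuous B' :=
    f.continuous_finsum_smul fun i y _ => continuousAt_const
  -- pointwise estimates on indices in the support
  have hkey : ∀ (i : Z) (z : Z), f i z ≠ 0 →
      ‖(i : 𝒴) - (z : 𝒴)‖ ≤ ‖(z : 𝒴)‖ / 4 ∧ ‖x i‖ ≤ 2 * M₀ * ‖(z : 𝒴)‖ := by
    intro i z hiz
    have hz : z ∈ U i := hf i (subset_closure (by simpa [Function.mem_support] using hiz))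
    have h1 : ‖(z : 𝒴) - (i : 𝒴)‖ < ‖(i : 𝒴)‖ / 8 := hz
    have h2 : ‖(i : 𝒴)‖ ≤ ‖(i : 𝒴) - (z : 𝒴)‖ + ‖(z : 𝒴)‖ := by
      simpa using norm_add_le ((i : 𝒴) - (z : 𝒴)) (z : 𝒴)
    have h3 : ‖(i : 𝒴) - (z : 𝒴)‖ = ‖(z : 𝒴) - (i : 𝒴)‖ := norm_sub_rev _ _
    have h4 : ‖(i : 𝒴)‖ ≤ (8/7) * ‖(z : 𝒴)‖ := by rw [h3] at h2; linarith
    constructor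
    · rw [h3]; have := norm_nonneg (z : 𝒴); linarith
    · have := hRbound (i : 𝒴)
      have hxle : ‖x i‖ ≤ M₀ * ‖(i : 𝒴)‖ := this
      nlinarith [norm_nonneg (z : 𝒴)]
  classical
  set B : 𝒴 → 𝒳 := fun y => if h : y = 0 then 0 else B' ⟨y, h⟩ with hB
  have hB0 : B 0 = 0 := by simp [hB]
  -- the two estimates
  have hest : ∀ y : 𝒴, ‖B y‖ ≤ (2 * M₀) * ‖y‖ ∧ ‖L (B y) - y‖ ≤ (1/4) * ‖y‖ := by
    intro y
    rcases eq_or_ne y 0 with rfl | hy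
    · simp [hB0]
    · set z : Z := ⟨y, hy⟩ with hzdef
      set t : Finset Z := f.finsupport z with ht
      have hmem : ∀ i, i ∈ t ↔ f i z ≠ 0 := by
        intro i; rw [ht, f.mem_finsupport]; rfl
      have hsum1 : ∑ i ∈ t, f i z = 1 := f.sum_finsupport (mem_univ z)
      have hsupp : (Function.support fun i => f i z • x i) ⊆ ↑t := by
        intro i hi
        have : f i z ≠ 0 := by
          intro h; apply hi; simp [h]
        simpa [Finset.mem_coe, hmem] using this
      have hBz : B y = ∑ i ∈ t, f i z • x i := by
        rw [hB]; simp only [dif_neg hy]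
        exact finsum_eq_sum_of_support_subset _ hsupp
      have hnn : ∀ i ∈ t, 0 ≤ f i z := fun i _ => f.nonneg i z
      constructor
      · rw [hBz]
        calc ‖∑ i ∈ t, f i z • x i‖ ≤ ∑ i ∈ t, ‖f i z • x i‖ := norm_sum_le _ _
          _ = ∑ i ∈ t, f i z * ‖x i‖ := by
              refine Finset.sum_congr rfl fun i hi => ?_
              rw [norm_smul, Real.norm_eq_abs, abs_of_nonneg (hnn i hi)]
          _ ≤ ∑ i ∈ t, f i z * (2 * M₀ * ‖y‖) := by
              refine Finset.sum_le_sum fun i hi => ?_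
              exact mul_le_mul_of_nonneg_left ((hkey i z ((hmem i).1 hi)).2) (hnn i hi)
          _ = (2 * M₀) * ‖y‖ := by rw [← Finset.sum_mul, hsum1]; ring
      · have hLB : L (B y) = ∑ i ∈ t, f i z • (i : 𝒴) := by
          rw [hBz, map_sum]
          refine Finset.sum_congr rfl fun i hi => ?_
          rw [map_smul]
          congr 1
          exact R.right_inv (i : 𝒴)
        have hdiff : ∑ i ∈ t, f i z • (i : 𝒴) - y = ∑ i ∈ t, (f i z • (i : 𝒴) - f i z • y) := by
          rw [Finset.sum_sub_distrib, ← Finset.sum_smul, hsum1, one_smul]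
        rw [hLB, hdiff]
        calc ‖∑ i ∈ t, (f i z • (i : 𝒴) - f i z • y)‖
            ≤ ∑ i ∈ t, ‖f i z • (i : 𝒴) - f i z • y‖ := norm_sum_le _ _
          _ = ∑ i ∈ t, f i z * ‖(i : 𝒴) - y‖ := by
              refine Finset.sum_congr rfl fun i hi => ?_
              rw [← smul_sub, norm_smul, Real.norm_eq_abs, abs_of_nonneg (hnn i hi)]
          _ ≤ ∑ i ∈ t, f i z * (‖y‖/4) := by
              refine Finset.sum_le_sum fun i hi => ?_
              exact mul_le_mul_of_nonneg_left ((hkey i z ((hmem i).1 hi)).1) (hnn i hi)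
          _ = (1/4) * ‖y‖ := by rw [← Finset.sum_mul, hsum1]; ring
  -- continuity
  have hBcont : Continuous B := by
    rw [continuous_iff_continuousAt]
    intro y
    rcases eq_or_ne y 0 with rfl | hy
    · unfold ContinuousAt
      rw [hB0]
      refine squeeze_zero_norm (fun x => (hest x).1) ?_
      have : Continuous fun y : 𝒴 => (2 * M₀) * ‖y‖ := continuous_const.mul continuous_norm
      simpa using this.tendsto' 0 0 (by simp)
    · have hopen : IsOpen {y : 𝒴 | y ≠ 0} := isOpen_compl_singleton
      have hemb : IsOpenEmbedding (Subtype.val : Z → 𝒴) := hopen.isOpenEmbedding_subtypeVal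
      have hcomp : B ∘ (Subtype.val : Z → 𝒴) = B' := by
        funext w
        simp only [Function.comp_apply, hB, dif_neg w.2]
      have : ContinuousAt (B ∘ (Subtype.val : Z → 𝒴)) ⟨y, hy⟩ := by
        rw [hcomp]; exact hB'cont.continuousAt
      exact (hemb.continuousAt_iff).1 this
  exact ⟨2 * M₀, by positivity, B, hBcont, hB0, fun y => (hest y).1, fun y => (hest y).2⟩

set_option maxHeartbeats 1600000 in
theorem graves_local_right_inverse
    {𝒳 𝒴 : Type*} [NormedAddCommGroup 𝒳] [NormedSpace ℝ 𝒳] [CompleteSpace 𝒳]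
    [NormedAddCommGroup 𝒴] [NormedSpace ℝ 𝒴] [CompleteSpace 𝒴]
    (Ω : Set 𝒳) (hΩ : Ω ∈ nhds (0 : 𝒳))
    (F : 𝒳 → 𝒴) (hFcont : ContinuousOn F Ω) (hF0 : F 0 = 0)
    (L : 𝒳 →L[ℝ] 𝒴) (hL : Function.Surjective L)
    (C : ℝ) (hC : 0 ≤ C)
    (hFL : ∀ x₁ ∈ Ω, ∀ x₂ ∈ Ω,
      ‖F x₁ - F x₂ - L (x₁ - x₂)‖ ≤ C * (‖x₁‖ + ‖x₂‖) * ‖x₁ - x₂‖) :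
    ∃ V : Set 𝒴, IsOpen V ∧ (0 : 𝒴) ∈ V ∧
      ∃ σ : 𝒴 → 𝒳, ContinuousOn σ V ∧ ∀ y ∈ V, σ y ∈ Ω ∧ F (σ y) = y := by
  classical
  haveI : Nonempty 𝒳 := ⟨0⟩
  obtain ⟨M, hM, B, hBcont, hB0, hBle, hBapprox⟩ := graves_aux_approx_right_inverse L hL
  obtain ⟨ρ, hρpos, hρ⟩ := Metric.mem_nhds_iff.1 hΩ
  set δ : ℝ := min (ρ / (4 * M)) (1 / (16 * (C + 1) * M ^ 2)) with hδdef
  have hδpos : 0 < δ := lt_min (by positivity) (by positivity)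
  have hδ1 : δ ≤ ρ / (4 * M) := min_le_left _ _
  have hδ2 : δ ≤ 1 / (16 * (C + 1) * M ^ 2) := min_le_right _ _
  set V : Set 𝒴 := Metric.ball 0 δ with hV
  have hVnorm : ∀ y ∈ V, ‖y‖ < δ := by
    intro y hy; rwa [hV, Metric.mem_ball, dist_zero_right] at hy
  obtain ⟨s, hs0, hsS⟩ : ∃ s : ℕ → 𝒴 → 𝒳, (∀ y, s 0 y = 0) ∧
      (∀ n y, s (n+1) y = s n y + B (y - F (s n y))) :=
    ⟨fun n => Nat.rec (fun _ => (0:𝒳)) (fun _ g y => g y + B (y - F (g y))) n,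
      fun _ => rfl, fun _ _ => rfl⟩
  have hmemΩ : ∀ y : 𝒴, ‖y‖ < δ → ∀ x : 𝒳, ‖x‖ ≤ 2 * M * ‖y‖ →
      x ∈ Metric.ball (0:𝒳) ρ := by
    intro y hy x hx
    rw [Metric.mem_ball, dist_zero_right]
    have h1 : 2 * M * ‖y‖ < 2 * M * δ := by nlinarith [norm_nonneg y]
    have h2 : 4 * M * δ ≤ ρ := by
      rw [le_div_iff₀ (by positivity)] at hδ1; linarith
    linarith
  have key : ∀ y : 𝒴, ‖y‖ < δ → ∀ n, ‖y - F (s n y)‖ ≤ (1/2)^n * ‖y‖ ∧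
      ‖s n y‖ ≤ 2 * M * (1 - (1/2)^n) * ‖y‖ := by
    intro y hy n
    induction n with
    | zero =>
      constructor
      · simp [hs0, hF0]
      · simp [hs0]
    | succ n ih =>
      obtain ⟨hr, hsn⟩ := ih
      have hyn : (0:ℝ) ≤ ‖y‖ := norm_nonneg y
      have hpow : (0:ℝ) < (1/2)^n := by positivity
      have hpow1 : ((1:ℝ)/2)^n ≤ 1 := pow_le_one₀ (by norm_num) (by norm_num)
      have hpow1' : ((1:ℝ)/2)^(n+1) ≤ 1 := pow_le_one₀ (by norm_num) (by norm_num)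
      have hd : ‖B (y - F (s n y))‖ ≤ M * ((1/2)^n * ‖y‖) :=
        (hBle _).trans (by nlinarith [norm_nonneg (y - F (s n y))])
      have hsn2M : ‖s n y‖ ≤ 2 * M * ‖y‖ :=
        hsn.trans (by nlinarith [mul_nonneg (mul_nonneg hM.le hpow.le) hyn])
      have hsn1 : ‖s (n+1) y‖ ≤ 2 * M * (1 - (1/2)^(n+1)) * ‖y‖ := by
        rw [hsS n y]
        refine (norm_add_le _ _).trans ?_
        calc ‖s n y‖ + ‖B (y - F (s n y))‖
            ≤ 2*M*(1-(1/2)^n)*‖y‖ + M*((1/2)^n*‖y‖) := add_le_add hsn hd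
          _ = 2*M*(1-(1/2)^(n+1))*‖y‖ := by ring
      have hpow'' : (0:ℝ) < (1/2)^(n+1) := by positivity
      have hsn1' : ‖s (n+1) y‖ ≤ 2 * M * ‖y‖ :=
        hsn1.trans (by nlinarith [mul_nonneg (mul_nonneg hM.le hpow''.le) hyn])
      have hΩn : s n y ∈ Ω := hρ (hmemΩ y hy _ hsn2M)
      have hΩn1 : s (n+1) y ∈ Ω := hρ (hmemΩ y hy _ hsn1')
      have hdiffd : s (n+1) y - s n y = B (y - F (s n y)) := by rw [hsS n y]; abel
      have hE := hFL _ hΩn1 _ hΩn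
      rw [hdiffd] at hE
      have hEle : ‖F (s (n+1) y) - F (s n y) - L (B (y - F (s n y)))‖
          ≤ (1/4) * ((1/2)^n * ‖y‖) := by
        refine hE.trans ?_
        have hBnn : (0:ℝ) ≤ ‖B (y - F (s n y))‖ := norm_nonneg _
        have hsum : ‖s (n+1) y‖ + ‖s n y‖ ≤ 4 * M * ‖y‖ := by linarith
        have hδsmall : 16 * (C+1) * M^2 * δ ≤ 1 := by
          rw [le_div_iff₀ (by positivity)] at hδ2; linarith
        have hsnn : (0:ℝ) ≤ ‖s (n+1) y‖ + ‖s n y‖ := by positivity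
        calc C * (‖s (n+1) y‖ + ‖s n y‖) * ‖B (y - F (s n y))‖
            ≤ C * (4*M*‖y‖) * (M * ((1/2)^n * ‖y‖)) := by
              have h1 : C * (‖s (n+1) y‖ + ‖s n y‖) ≤ C * (4*M*‖y‖) :=
                mul_le_mul_of_nonneg_left hsum hC
              have h2 : (0:ℝ) ≤ C * (4*M*‖y‖) := by positivity
              exact mul_le_mul h1 hd hBnn h2
          _ ≤ (1/4) * ((1/2)^n * ‖y‖) := by
              have hq1 : 4*C*M^2*‖y‖ ≤ 4*C*M^2*δ :=
                mul_le_mul_of_nonneg_left hy.le (by positivity)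
              have hq2 : 4*C*M^2*δ ≤ 1/4 := by
                nlinarith [mul_nonneg (sq_nonneg M) hδpos.le]
              have hq3 : 4*C*M^2*‖y‖ ≤ 1/4 := hq1.trans hq2
              have hq4 := mul_le_mul_of_nonneg_right hq3 (mul_nonneg hpow.le hyn)
              calc C * (4*M*‖y‖) * (M * ((1/2)^n * ‖y‖))
                  = (4*C*M^2*‖y‖) * ((1/2)^n * ‖y‖) := by ring
                _ ≤ (1/4) * ((1/2)^n * ‖y‖) := hq4
      constructor
      · have hid : y - F (s (n+1) y) =
            -(L (B (y - F (s n y))) - (y - F (s n y)))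
              - (F (s (n+1) y) - F (s n y) - L (B (y - F (s n y)))) := by abel
        rw [hid]
        refine (norm_sub_le _ _).trans ?_
        rw [norm_neg]
        have h2 : ‖L (B (y - F (s n y))) - (y - F (s n y))‖ ≤ (1/4) * ((1/2)^n * ‖y‖) :=
          (hBapprox _).trans (by linarith [hr])
        calc ‖L (B (y - F (s n y))) - (y - F (s n y))‖
              + ‖F (s (n+1) y) - F (s n y) - L (B (y - F (s n y)))‖
            ≤ (1/4)*((1/2)^n*‖y‖) + (1/4)*((1/2)^n*‖y‖) := add_le_add h2 hEle
          _ = (1/2)^(n+1) * ‖y‖ := by ring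
      · exact hsn1
  have hkey2 : ∀ y, ‖y‖ < δ → ∀ n, ‖s n y‖ ≤ 2 * M * ‖y‖ := by
    intro y hy n
    refine (key y hy n).2.trans ?_
    have h1 : (0:ℝ) < (1/2)^n := by positivity
    nlinarith [mul_nonneg (mul_nonneg hM.le h1.le) (norm_nonneg y)]
  have hsΩ : ∀ y, ‖y‖ < δ → ∀ n, s n y ∈ Ω := fun y hy n => hρ (hmemΩ y hy _ (hkey2 y hy n))
  have hscont : ∀ n, ContinuousOn (s n) V := by
    intro n
    induction n with
    | zero =>
      have heq0 : s 0 = fun _ => (0:𝒳) := funext hs0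
      rw [heq0]; exact continuousOn_const
    | succ n ih =>
      have hFs : ContinuousOn (fun y => F (s n y)) V :=
        hFcont.comp ih fun y hy => hsΩ y (hVnorm y hy) n
      have heq : s (n+1) = fun y => s n y + B (y - F (s n y)) := funext fun y => hsS n y
      rw [heq]
      exact ih.add (hBcont.comp_continuousOn (continuousOn_id.sub hFs))
  have hstep : ∀ y, ‖y‖ < δ → ∀ n, dist (s n y) (s (n+1) y) ≤ (M * δ) * (1/2)^n := by
    intro y hy n
    rw [dist_eq_norm, hsS n y]
    have h0 : s n y - (s n y + B (y - F (s n y))) = -(B (y - F (s n y))) := by abel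
    rw [h0, norm_neg]
    refine (hBle _).trans ?_
    have h1 := (key y hy n).1
    have h2 : (0:ℝ) < (1/2)^n := by positivity
    have h3 := mul_le_mul_of_nonneg_left h1 hM.le
    have h4 := mul_le_mul_of_nonneg_left hy.le (mul_nonneg hM.le h2.le)
    nlinarith [h3, h4]
  have hcauchy : ∀ y, ‖y‖ < δ → CauchySeq (fun n => s n y) := fun y hy =>
    cauchySeq_of_le_geometric (1/2) (M * δ) (by norm_num) (hstep y hy)
  set σ : 𝒴 → 𝒳 := fun y => limUnder atTop (fun n => s n y) with hσ
  have htend : ∀ y, ‖y‖ < δ → Tendsto (fun n => s n y) atTop (𝓝 (σ y)) :=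
    fun y hy => (hcauchy y hy).tendsto_limUnder
  have hdistlim : ∀ y, ‖y‖ < δ → ∀ n,
      dist (s n y) (σ y) ≤ (M * δ) * (1/2)^n / (1 - 1/2) := fun y hy n =>
    dist_le_of_le_geometric_of_tendsto (1/2) (M * δ) (by norm_num) (hstep y hy) (htend y hy) n
  have hunif : TendstoUniformlyOn (fun n y => s n y) σ atTop V := by
    rw [Metric.tendstoUniformlyOn_iff]
    intro ε hε
    have h2 : Tendsto (fun n : ℕ => (M * δ) * (1/2)^n / (1 - 1/2)) atTop (𝓝 0) := by
      have h3 := tendsto_pow_atTop_nhds_zero_of_lt_one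
        (by norm_num : (0:ℝ) ≤ 1/2) (by norm_num : (1/2:ℝ) < 1)
      have h4 := (h3.const_mul (M * δ)).div_const (1 - 1/2)
      simpa using h4
    filter_upwards [h2.eventually (gt_mem_nhds hε)] with n hn y hy
    calc dist (σ y) (s n y) = dist (s n y) (σ y) := dist_comm _ _
      _ ≤ (M * δ) * (1/2)^n / (1 - 1/2) := hdistlim y (hVnorm y hy) n
      _ < ε := hn
  have hσcont : ContinuousOn σ V := hunif.continuousOn (Eventually.of_forall hscont).frequently
  refine ⟨V, Metric.isOpen_ball, Metric.mem_ball_self hδpos, σ, hσcont, ?_⟩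
  intro y hyV
  have hy := hVnorm y hyV
  have hσnorm : ‖σ y‖ ≤ 2 * M * ‖y‖ := by
    have h1 : Tendsto (fun n => ‖s n y‖) atTop (𝓝 ‖σ y‖) := (htend y hy).norm
    exact le_of_tendsto h1 (Eventually.of_forall fun n => hkey2 y hy n)
  have hσball : σ y ∈ Metric.ball (0:𝒳) ρ := hmemΩ y hy _ hσnorm
  refine ⟨hρ hσball, ?_⟩
  have hΩnhds : Ω ∈ 𝓝 (σ y) := mem_of_superset (Metric.isOpen_ball.mem_nhds hσball) hρ
  have hFtend : Tendsto (fun n => F (s n y)) atTop (𝓝 (F (σ y))) :=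
    (hFcont.continuousAt hΩnhds).tendsto.comp (htend y hy)
  have hr0 : Tendsto (fun n => y - F (s n y)) atTop (𝓝 0) := by
    refine squeeze_zero_norm (fun n => (key y hy n).1) ?_
    have h3 := tendsto_pow_atTop_nhds_zero_of_lt_one
      (by norm_num : (0:ℝ) ≤ 1/2) (by norm_num : (1/2:ℝ) < 1)
    simpa using h3.mul_const ‖y‖
  have hFtend2 : Tendsto (fun n => F (s n y)) atTop (𝓝 y) := by
    have h5 := (tendsto_const_nhds (x := y) (f := (atTop : Filter ℕ))).sub hr0
    simpa using h5
  exact tendsto_nhds_unique hFtend hFtend2
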